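/- Let βV : Δ⁺ → ℕ be non-decreasing in the first variable and non-increasing in the second, and let βY : Δ⁺ → ℕ satisfy the sandwich inequality βV(u − ω, v + ω) ≤ βY(u, v) ≤ βV(u + ω, v − ω) whenever u + ω ≺ v − ω, where ω = (Ω,…,Ω), Ω ≥ 0. If βY(ū, v̄) ≠ βV(ū, v̄) at some (ū, v̄) ∈ Δ⁺, then either the closed max-norm ball of radius Ω around (ū, v̄) meets the complement of Δ⁺, or βV is not constant on that closed ball. -/

import Mathlib

/-- `Δ⁺ = {(u,v) ∈ ℝⁿ×ℝⁿ : u ≺ v}` (strict componentwise order). -/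
def Dplus (n : ℕ) : Set ((Fin n → ℝ) × (Fin n → ℝ)) := {p | ∀ j, p.1 j < p.2 j}

/-- blind strips, contrapositive form: under the sandwich inequality and
monotonicity of `βV`, if `βY(ū,v̄) ≠ βV(ū,v̄)` at `(ū,v̄) ∈ Δ⁺`, then the closed max-norm
ball of radius `Ω` around `(ū,v̄)` meets the complement of `Δ⁺`, or `βV` is not constant
on that closed ball. -/
theorem near_boundary_or_discontinuity_of_ne {n : ℕ}
    (βY βV : ((Fin n → ℝ) × (Fin n → ℝ)) → ℕ) (Ω : ℝ) (hΩ : 0 ≤ Ω)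
    (hmono₁ : ∀ u u' v : Fin n → ℝ, (u, v) ∈ Dplus n → (u', v) ∈ Dplus n →
      u ≤ u' → βV (u, v) ≤ βV (u', v))
    (hmono₂ : ∀ u v v' : Fin n → ℝ, (u, v) ∈ Dplus n → (u, v') ∈ Dplus n →
      v ≤ v' → βV (u, v') ≤ βV (u, v))
    (hsand : ∀ u v : Fin n → ℝ, (∀ j, u j + Ω < v j - Ω) →
      βV (fun j => u j - Ω, fun j => v j + Ω) ≤ βY (u, v) ∧
      βY (u, v) ≤ βV (fun j => u j + Ω, fun j => v j - Ω))
    (p₀ : (Fin n → ℝ) × (Fin n → ℝ)) (hp₀ : p₀ ∈ Dplus n)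
    (hne : βY p₀ ≠ βV p₀) :
    (∃ q ∈ Metric.closedBall p₀ Ω, q ∉ Dplus n) ∨
    (∃ q ∈ Metric.closedBall p₀ Ω, ∃ q' ∈ Metric.closedBall p₀ Ω, βV q ≠ βV q') := by
  by_contra h
  push_neg at h
  obtain ⟨hin, hconst⟩ := h
  obtain ⟨u, v⟩ := p₀
  -- the two corner points are in the closed ball
  have hball : ∀ s t : ℝ, |s| ≤ Ω → |t| ≤ Ω →
      ((fun j => u j + s, fun j => v j + t) : (Fin n → ℝ) × (Fin n → ℝ))
        ∈ Metric.closedBall (u, v) Ω := by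
    intro s t hs ht
    rw [Metric.mem_closedBall, Prod.dist_eq]
    apply max_le <;> rw [dist_pi_le_iff hΩ] <;> intro j <;>
      simp [Real.dist_eq, hs, ht]
  have h1 : ((fun j => u j + Ω, fun j => v j + (-Ω)) : (Fin n → ℝ) × (Fin n → ℝ))
      ∈ Metric.closedBall (u, v) Ω := hball Ω (-Ω) (by rw [abs_of_nonneg hΩ]) (by rw [abs_neg, abs_of_nonneg hΩ])
  have h2 : ((fun j => u j + (-Ω), fun j => v j + Ω) : (Fin n → ℝ) × (Fin n → ℝ))
      ∈ Metric.closedBall (u, v) Ω := hball (-Ω) Ω (by rw [abs_neg, abs_of_nonneg hΩ]) (by rw [abs_of_nonneg hΩ])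
  have hsep : ∀ j, u j + Ω < v j - Ω := by
    intro j
    have := hin _ h1 j
    simpa [sub_eq_add_neg] using this
  obtain ⟨hl, hr⟩ := hsand u v hsep
  have e1 : βV (fun j => u j - Ω, fun j => v j + Ω) = βV (u, v) := by
    have := hconst _ (by simpa [sub_eq_add_neg] using h2) (u, v) (Metric.mem_closedBall_self hΩ)
    simpa [sub_eq_add_neg] using this
  have e2 : βV (fun j => u j + Ω, fun j => v j - Ω) = βV (u, v) := by
    have := hconst _ (by simpa [sub_eq_add_neg] using h1) (u, v) (Metric.mem_closedBall_self hΩ)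
    simpa [sub_eq_add_neg] using this
  rw [e1] at hl
  rw [e2] at hr
  exact hne (le_antisymm hr hl)
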